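/- If i ≠ j and ℓ i j = (q : ℕ∞) for a natural number q, then (A ^ q) i j equals the number of injective walks (i.e., paths) of length q from i to j; that is, the entry of the q-th matrix power counts the shortest paths from i to j. -/

import Mathlib

/-- The shortest path length `ℓ i j`: the least positive `k` with `(A ^ k) i j ≠ 0`,
as an element of `ℕ∞` (`⊤` if no such `k` exists), and `ℓ i i = 0`. -/
noncomputable def ell (n : ℕ) (A : Matrix (Fin n) (Fin n) ℕ) (i j : Fin n) : ℕ∞ :=
  if i = j then 0
  else sInf ((fun k : ℕ => (k : ℕ∞)) '' {k : ℕ | 1 ≤ k ∧ (A ^ k) i j ≠ 0})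

/-- The walk predicate. -/
def walkP {n : ℕ} (A : Matrix (Fin n) (Fin n) ℕ) (k : ℕ) (i j : Fin n)
    (v : Fin (k+1) → Fin n) : Prop :=
  v 0 = i ∧ v (Fin.last k) = j ∧ ∀ t : Fin k, A (v t.castSucc) (v t.succ) = 1

instance {n : ℕ} (A : Matrix (Fin n) (Fin n) ℕ) (k : ℕ) (i j : Fin n) :
    DecidablePred (walkP A k i j) := fun v => by unfold walkP; infer_instance

/-- The finset of walks of length `k` from `i` to `j`. -/
def walkFinset {n : ℕ} (A : Matrix (Fin n) (Fin n) ℕ) (k : ℕ) (i j : Fin n) :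
    Finset (Fin (k+1) → Fin n) := Finset.univ.filter (walkP A k i j)

lemma pow_eq_card {n : ℕ} (A : Matrix (Fin n) (Fin n) ℕ)
    (hA : ∀ i j, A i j = 0 ∨ A i j = 1) (k : ℕ) (i j : Fin n) :
    (A ^ k) i j = (walkFinset A k i j).card := by
  induction k generalizing j with
  | zero =>
    simp only [pow_zero, Matrix.one_apply]
    rcases eq_or_ne i j with h | h
    · subst h
      rw [if_pos rfl]
      symm
      rw [Finset.card_eq_one]
      refine ⟨fun _ => i, ?_⟩
      ext v
      simp only [walkFinset, walkP, Finset.mem_filter, Finset.mem_univ, true_and,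
        Finset.mem_singleton]
      constructor
      · rintro ⟨h1, h2, h3⟩
        funext t
        have ht : t = 0 := Fin.ext (by omega)
        rw [ht, h1]
      · rintro rfl
        exact ⟨rfl, rfl, fun t => t.elim0⟩
    · rw [if_neg h]
      symm
      rw [Finset.card_eq_zero, Finset.eq_empty_iff_forall_notMem]
      intro v hv
      simp only [walkFinset, walkP, Finset.mem_filter, Finset.mem_univ, true_and] at hv
      obtain ⟨h1, h2, -⟩ := hv
      exact h (h1.symm.trans h2)
  | succ k ih =>
    rw [pow_succ, Matrix.mul_apply]
    rw [show (walkFinset A (k+1) i j).card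
        = ∑ m : Fin n, ((walkFinset A (k+1) i j).filter
            fun v => v (Fin.castSucc (Fin.last k)) = m).card
      from Finset.card_eq_sum_card_fiberwise (fun v _ => Finset.mem_univ _)]
    refine Finset.sum_congr rfl fun m _ => ?_
    rw [ih m]
    rcases hA m j with h0 | h1
    · rw [h0, mul_zero]
      symm
      rw [Finset.card_eq_zero, Finset.eq_empty_iff_forall_notMem]
      intro v hv
      simp only [walkFinset, walkP, Finset.mem_filter, Finset.mem_univ, true_and] at hv
      obtain ⟨⟨-, h2, h3⟩, hpen⟩ := hv
      have := h3 (Fin.last k)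
      rw [hpen, Fin.succ_last, h2, h0] at this
      exact zero_ne_one this
    · rw [h1, mul_one]
      refine Finset.card_nbij' (fun w => Fin.snoc w j) (fun v => v ∘ Fin.castSucc)
        ?_ ?_ ?_ ?_
      · intro w hw
        simp only [Finset.mem_coe, walkFinset, walkP, Finset.mem_filter, Finset.mem_univ, true_and] at hw ⊢
        obtain ⟨hw0, hwl, hwe⟩ := hw
        refine ⟨⟨?_, ?_, ?_⟩, ?_⟩
        · rw [show (0 : Fin (k+2)) = Fin.castSucc 0 by simp, Fin.snoc_castSucc]
          exact hw0
        · exact Fin.snoc_last _ _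
        · intro t
          refine Fin.lastCases ?_ (fun s => ?_) t
          · rw [Fin.succ_last, Fin.snoc_last, Fin.snoc_castSucc, hwl]
            exact h1
          · rw [Fin.succ_castSucc, Fin.snoc_castSucc, Fin.snoc_castSucc]
            exact hwe s
        · rw [Fin.snoc_castSucc]
          exact hwl
      · intro v hv
        simp only [Finset.mem_coe, walkFinset, walkP, Finset.mem_filter, Finset.mem_univ, true_and] at hv ⊢
        obtain ⟨⟨hv0, hvl, hve⟩, hpen⟩ := hv
        refine ⟨?_, ?_, ?_⟩
        · simpa using hv0
        · exact hpen
        · intro s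
          have := hve s.castSucc
          rwa [Fin.succ_castSucc] at this
      · intro w hw
        funext s
        simp [Fin.snoc_castSucc]
      · intro v hv
        funext t
        refine Fin.lastCases ?_ (fun s => ?_) t
        · simp only [Fin.snoc_last]
          simp only [Finset.mem_coe, walkFinset, walkP, Finset.mem_filter, Finset.mem_univ, true_and] at hv
          exact hv.1.2.1.symm
        · simp [Fin.snoc_castSucc]

lemma shorten {n q : ℕ} (A : Matrix (Fin n) (Fin n) ℕ)
    (hA : ∀ i j, A i j = 0 ∨ A i j = 1)
    {i j : Fin n} (hij : i ≠ j) (v : Fin (q+1) → Fin n)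
    (hv : walkP A q i j v) (hninj : ¬ Function.Injective v) :
    ∃ q', 1 ≤ q' ∧ q' < q ∧ (A ^ q') i j ≠ 0 := by
  rw [Function.not_injective_iff] at hninj
  obtain ⟨a, b, hab, hne⟩ : ∃ a b : Fin (q+1), v a = v b ∧ (a:ℕ) < (b:ℕ) := by
    obtain ⟨a, b, heq, hne⟩ := hninj
    rcases lt_or_gt_of_ne (fun h : (a:ℕ) = (b:ℕ) => hne (Fin.ext h)) with h | h
    exacts [⟨a, b, heq, h⟩, ⟨b, a, heq.symm, h⟩]
  obtain ⟨hv0, hvl, hve⟩ := hv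
  have hbq : (b:ℕ) ≤ q := Nat.lt_succ_iff.mp b.isLt
  set d : ℕ := (b:ℕ) - (a:ℕ) with hd
  set q' : ℕ := q - d with hq'
  have hd1 : 1 ≤ d := by omega
  have haq' : (a:ℕ) ≤ q' := by omega
  -- proof-insensitive version of v
  set v' : ℕ → Fin n := fun x => v ⟨min x q, Nat.lt_succ_of_le (min_le_right x q)⟩
    with hv'def
  have hv'eq : ∀ (x : ℕ) (h : x < q + 1), v' x = v ⟨x, h⟩ := by
    intro x h
    simp only [hv'def]
    exact congrArg v (Fin.ext (by simp; omega))
  have h0' : v' 0 = i := by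
    rw [hv'eq 0 (by omega), show (⟨0, by omega⟩ : Fin (q+1)) = 0 from Fin.ext (by simp)]
    exact hv0
  have hq'' : v' q = j := by
    rw [hv'eq q (by omega), show (⟨q, by omega⟩ : Fin (q+1)) = Fin.last q from rfl]
    exact hvl
  have hstep : ∀ x : ℕ, x + 1 ≤ q → A (v' x) (v' (x+1)) = 1 := by
    intro x hx
    have h := hve ⟨x, by omega⟩
    have e1 : v' x = v (Fin.castSucc ⟨x, by omega⟩) :=
      congrArg v (Fin.ext (by simp; omega))
    have e2 : v' (x+1) = v (Fin.succ ⟨x, by omega⟩) :=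
      congrArg v (Fin.ext (by simp; omega))
    rw [e1, e2]
    exact h
  have hv'ab : v' (a:ℕ) = v' (b:ℕ) := by
    rw [hv'eq _ a.isLt, hv'eq _ b.isLt]
    simpa using hab
  -- the shortened walk
  refine ⟨q', by
    -- 1 ≤ q'
    by_contra hq0
    push_neg at hq0
    interval_cases q'
    · have ha0 : (a:ℕ) = 0 := by omega
      have hbq' : (b:ℕ) = q := by omega
      rw [ha0, hbq'] at hv'ab
      apply hij
      rw [← h0', ← hq'']
      exact hv'ab, by omega, ?_⟩
  rw [pow_eq_card A hA]
  apply Finset.card_ne_zero_of_mem (a := fun t : Fin (q'+1) =>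
    if (t:ℕ) ≤ (a:ℕ) then v' t else v' ((t:ℕ) + d))
  simp only [walkFinset, walkP, Finset.mem_filter, Finset.mem_univ, true_and]
  refine ⟨?_, ?_, ?_⟩
  · simp only [Fin.val_zero, Nat.zero_le, if_pos]
    exact h0'
  · simp only [Fin.val_last]
    by_cases hc : q' ≤ (a:ℕ)
    · rw [if_pos hc]
      have : (a:ℕ) = q' := by omega
      rw [show (q':ℕ) = (a:ℕ) from this.symm, hv'ab, show (b:ℕ) = q by omega]
      exact hq''
    · rw [if_neg hc, show q' + d = q by omega]
      exact hq''
  · intro t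
    have ht : (t:ℕ) < q' := t.isLt
    simp only [Fin.coe_castSucc, Fin.val_succ]
    by_cases h1 : (t:ℕ) + 1 ≤ (a:ℕ)
    · rw [if_pos (by omega), if_pos h1]
      exact hstep t (by omega)
    · by_cases h2 : (t:ℕ) ≤ (a:ℕ)
      · -- t = a : jump across
        rw [if_pos h2, if_neg h1]
        have hta : (t:ℕ) = (a:ℕ) := by omega
        rw [hta, hv'ab, show (a:ℕ) + 1 + d = (b:ℕ) + 1 by omega]
        exact hstep b (by omega)
      · rw [if_neg h2, if_neg (by omega : ¬ (t:ℕ) + 1 ≤ (a:ℕ)),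
          show (t:ℕ) + 1 + d = ((t:ℕ) + d) + 1 by omega]
        exact hstep _ (by omega)

/-- If `i ≠ j` and `ℓ i j = q` for a natural number `q`, then `(A ^ q) i j`
equals the number of injective walks (paths) of length `q` from `i` to `j`. -/
theorem matrix_power_counts_shortest_paths (n : ℕ) (hn : 2 ≤ n)
    (A : Matrix (Fin n) (Fin n) ℕ)
    (hA : ∀ i j, A i j = 0 ∨ A i j = 1) (hdiag : ∀ i, A i i = 0)
    (i j : Fin n) (hij : i ≠ j) (q : ℕ) (hq : ell n A i j = (q : ℕ∞)) :
    (A ^ q) i j =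
      Set.ncard {v : Fin (q + 1) → Fin n |
        (v 0 = i ∧ v (Fin.last q) = j ∧
          ∀ t : Fin q, A (v t.castSucc) (v t.succ) = 1) ∧
        Function.Injective v} := by
  rw [ell, if_neg hij] at hq
  set T : Set ℕ := {k : ℕ | 1 ≤ k ∧ (A ^ k) i j ≠ 0} with hT
  have hTne : T.Nonempty := by
    by_contra hemp
    rw [Set.not_nonempty_iff_eq_empty] at hemp
    rw [hemp, Set.image_empty, sInf_empty] at hq
    exact (ENat.coe_ne_top q) hq.symm
  have hmT : sInf T ∈ T := Nat.sInf_mem hTne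
  have hsinf : sInf ((fun k : ℕ => (k : ℕ∞)) '' T) = ((sInf T : ℕ) : ℕ∞) := by
    apply le_antisymm
    · exact sInf_le (Set.mem_image_of_mem _ hmT)
    · apply le_sInf
      rintro x ⟨k, hk, rfl⟩
      simp only []
      exact_mod_cast Nat.sInf_le hk
  rw [hsinf] at hq
  have hqT : q = sInf T := by exact_mod_cast hq.symm
  have hmin : ∀ k, 1 ≤ k → (A ^ k) i j ≠ 0 → q ≤ k := by
    intro k h1 h2
    rw [hqT]
    exact Nat.sInf_le ⟨h1, h2⟩
  have hinj : ∀ v, walkP A q i j v → Function.Injective v := by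
    intro v hv
    by_contra hn'
    obtain ⟨q', h1, h2, h3⟩ := shorten A hA hij v hv hn'
    exact absurd (hmin q' h1 h3) (by omega)
  rw [pow_eq_card A hA, ← Set.ncard_coe_finset]
  congr 1
  ext v
  simp only [walkFinset, Finset.coe_filter, Finset.mem_univ, true_and,
    Set.mem_setOf_eq]
  constructor
  · intro h
    exact ⟨h, hinj v h⟩
  · rintro ⟨h, -⟩
    exact h
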